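/- If zones of total width strictly less than π are given on S^d (widths 2α₁, ..., 2αₙ with Σαᵢ < π/2, unit axes u₁, ..., uₙ, wᵢ := sin(αᵢ)uᵢ), and ε₁, ..., εₙ ∈ {±1} maximize |Σεᵢwᵢ| with the maximum value at most 1, then the point (Σεᵢwᵢ)/|Σεᵢwᵢ| of S^d lies in none of the zones, i.e., the zones do not cover S^d in this case. -/

import Mathlib

open Real RealInnerProductSpace

/-- The escape point in the proof of the zone theorem: zones of half-widths
`α i ∈ (0, π/2)` with `∑ α i < π/2` and unit axes `u i` are given,
`w i := sin (α i) • u i`, and the signs `ε i ∈ {±1}` maximize `‖∑ ε i • w i‖`,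
with `0 < ‖∑ ε i • w i‖ ≤ 1`.  Then the normalized point `w/‖w‖ ∈ S^d` lies in no
open zone: `sin (α i) ≤ |⟪w/‖w‖, u i⟫|` for all `i`; moreover if `‖w‖ < 1` then
the inequality is strict for all `i`, so the point lies in none of the (closed)
zones and the zones do not cover `S^d`. -/
theorem maximal_signed_sum_escapes_zones
    (d n : ℕ) (u : Fin n → EuclideanSpace ℝ (Fin (d + 1))) (α : Fin n → ℝ)
    (hu : ∀ i, ‖u i‖ = 1) (hα : ∀ i, 0 < α i ∧ α i < π / 2)
    (hsum : ∑ i, α i < π / 2)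
    (w : Fin n → EuclideanSpace ℝ (Fin (d + 1)))
    (hw : ∀ i, w i = Real.sin (α i) • u i)
    (ε : Fin n → ℝ) (hε : ∀ i, ε i = 1 ∨ ε i = -1)
    (hmax : ∀ ε' : Fin n → ℝ, (∀ i, ε' i = 1 ∨ ε' i = -1) →
      ‖∑ i, ε' i • w i‖ ≤ ‖∑ i, ε i • w i‖)
    (hpos : 0 < ‖∑ i, ε i • w i‖) (hle : ‖∑ i, ε i • w i‖ ≤ 1) :
    (∀ i, Real.sin (α i) ≤ |⟪‖∑ j, ε j • w j‖⁻¹ • ∑ j, ε j • w j, u i⟫|) ∧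
    (‖∑ i, ε i • w i‖ < 1 →
      ∀ i, Real.sin (α i) < |⟪‖∑ j, ε j • w j‖⁻¹ • ∑ j, ε j • w j, u i⟫|) := by
  set W : EuclideanSpace ℝ (Fin (d + 1)) := ∑ j, ε j • w j with hW
  have hsin : ∀ i, 0 < Real.sin (α i) := fun i =>
    Real.sin_pos_of_pos_of_lt_pi (hα i).1 (lt_trans (hα i).2 (by linarith [Real.pi_pos]))
  -- key inequality: sin α i ≤ |⟪W, u i⟫|
  have key : ∀ i, Real.sin (α i) ≤ |⟪W, u i⟫| := by
    intro i
    set ε' : Fin n → ℝ := Function.update ε i (-ε i) with hε'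
    have hε'pm : ∀ j, ε' j = 1 ∨ ε' j = -1 := by
      intro j
      by_cases h : j = i
      · subst h; simp [hε', Function.update_self]
        rcases hε j with h | h <;> simp [h]
      · simp [hε', Function.update_of_ne h, hε j]
    have hsum' : ∑ j, ε' j • w j = W - (2 * ε i) • w i := by
      rw [hW]
      have : ∀ j, ε' j • w j = ε j • w j - (if j = i then (2 * ε i) • w i else 0) := by
        intro j
        by_cases h : j = i
        · subst h; simp [hε', Function.update_self]
          module
        · simp [hε', Function.update_of_ne h, h]
      simp_rw [this, Finset.sum_sub_distrib, Finset.sum_ite_eq' Finset.univ i]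
      simp
    have hle' : ‖W - (2 * ε i) • w i‖ ≤ ‖W‖ := by
      rw [← hsum']; exact hmax ε' hε'pm
    have hsq : ‖W - (2 * ε i) • w i‖ ^ 2 ≤ ‖W‖ ^ 2 := by
      exact pow_le_pow_left₀ (norm_nonneg _) hle' 2
    rw [norm_sub_sq_real] at hsq
    have hεsq : ε i ^ 2 = 1 := by rcases hε i with h | h <;> simp [h]
    have hwi : ‖w i‖ = Real.sin (α i) := by
      rw [hw i, norm_smul, hu i, Real.norm_eq_abs,
        abs_of_pos (hsin i), mul_one]
    have hnorm2 : ‖(2 * ε i) • w i‖ ^ 2 = 4 * Real.sin (α i) ^ 2 := by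
      rw [norm_smul, mul_pow, Real.norm_eq_abs, sq_abs, hwi, mul_pow, hεsq]
      ring
    have hinner : ⟪W, (2 * ε i) • w i⟫ = 2 * ε i * Real.sin (α i) * ⟪W, u i⟫ := by
      rw [hw i, real_inner_smul_right, real_inner_smul_right]; ring
    rw [hnorm2, hinner] at hsq
    have h1 : Real.sin (α i) ^ 2 ≤ ε i * Real.sin (α i) * ⟪W, u i⟫ := by nlinarith
    have h2 : Real.sin (α i) ≤ ε i * ⟪W, u i⟫ := by
      have := (mul_le_mul_iff_right₀ (hsin i)).mp (by nlinarith : Real.sin (α i) * Real.sin (α i) ≤ Real.sin (α i) * (ε i * ⟪W, u i⟫))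
      linarith
    calc Real.sin (α i) ≤ ε i * ⟪W, u i⟫ := h2
      _ ≤ |ε i * ⟪W, u i⟫| := le_abs_self _
      _ = |⟪W, u i⟫| := by rcases hε i with h | h <;> simp [h, abs_mul]
  have habs : ∀ i, |⟪‖W‖⁻¹ • W, u i⟫| = ‖W‖⁻¹ * |⟪W, u i⟫| := by
    intro i
    rw [real_inner_smul_left, abs_mul, abs_of_pos (inv_pos.mpr hpos)]
  constructor
  · intro i
    rw [habs i]
    calc Real.sin (α i) = 1 * Real.sin (α i) := (one_mul _).symm
      _ ≤ ‖W‖⁻¹ * Real.sin (α i) := by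
          apply mul_le_mul_of_nonneg_right _ (hsin i).le
          exact (one_le_inv₀ hpos).mpr hle
      _ ≤ ‖W‖⁻¹ * |⟪W, u i⟫| := by
          exact mul_le_mul_of_nonneg_left (key i) (inv_pos.mpr hpos).le
  · intro hlt i
    rw [habs i]
    have h1 : 1 < ‖W‖⁻¹ := (one_lt_inv₀ hpos).mpr hlt
    calc Real.sin (α i) = 1 * Real.sin (α i) := (one_mul _).symm
      _ < ‖W‖⁻¹ * Real.sin (α i) := by
          exact mul_lt_mul_of_pos_right h1 (hsin i)
      _ ≤ ‖W‖⁻¹ * |⟪W, u i⟫| := by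
          exact mul_le_mul_of_nonneg_left (key i) (inv_pos.mpr hpos).le
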